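/- Consider the chain complexes of abelian groups: A with A_1 = A_0 = ℤ and differential multiplication by 8; B with B_1 = B_0 = ℤ and differential multiplication by 4; C with C_2 = C_1 = ℤ and differential multiplication by 4; D with D_2 = ℤ (all other terms 0). Let f : A → B have f_1 = 2 and f_0 = 1, let g : B → C have sole nonzero component g_1 = 2 : B_1 → C_1, and let h : C → D have sole nonzero component h_2 = 1 : C_2 → D_2. Then f, g, h are chain maps, g∘f and h∘g are nullhomotopic, and for EVERY nullhomotopy S of g∘f and EVERY nullhomotopy T of h∘g, the Toda map φ(S,T) : ΣA → D is not chain homotopic to zero. (Hence the Toda bracket ⟨h,g,f⟩ does not vanish.) -/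

import Mathlib

/-! STATEMENT 18.  Chain complexes of abelian groups are encoded as families
`M r : ℤ → Type`, `(M r) m = Fin (r m) → ℤ` (so `r m` copies of `ℤ` in degree `m`),
with differentials `d m : (M r) (m+1) →ₗ[ℤ] (M r) m` given by integer matrices. -/

abbrev M (r : ℤ → ℕ) (m : ℤ) : Type := Fin (r m) → ℤ

/-- A has ℤ in degrees 0 and 1 -/
def rA : ℤ → ℕ := fun m => if m = 0 ∨ m = 1 then 1 else 0
/-- B has ℤ in degrees 0 and 1 -/
def rB : ℤ → ℕ := fun m => if m = 0 ∨ m = 1 then 1 else 0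
/-- C has ℤ in degrees 1 and 2 -/
def rC : ℤ → ℕ := fun m => if m = 1 ∨ m = 2 then 1 else 0
/-- D has ℤ in degree 2 only -/
def rD : ℤ → ℕ := fun m => if m = 2 then 1 else 0

/-- A = (ℤ --8--> ℤ) in degrees 1 → 0 -/
noncomputable def dA (m : ℤ) : M rA (m+1) →ₗ[ℤ] M rA m :=
  Matrix.mulVecLin (Matrix.of fun _ _ => if m = 0 then (8:ℤ) else 0)

/-- B = (ℤ --4--> ℤ) in degrees 1 → 0 -/
noncomputable def dB (m : ℤ) : M rB (m+1) →ₗ[ℤ] M rB m :=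
  Matrix.mulVecLin (Matrix.of fun _ _ => if m = 0 then (4:ℤ) else 0)

/-- C = (ℤ --4--> ℤ) in degrees 2 → 1 -/
noncomputable def dC (m : ℤ) : M rC (m+1) →ₗ[ℤ] M rC m :=
  Matrix.mulVecLin (Matrix.of fun _ _ => if m = 1 then (4:ℤ) else 0)

/-- D is concentrated in degree 2, so its differential is 0 -/
noncomputable def dD (m : ℤ) : M rD (m+1) →ₗ[ℤ] M rD m :=
  Matrix.mulVecLin (Matrix.of fun _ _ => (0:ℤ))

/-- f : A → B with f₁ = 2, f₀ = 1 -/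
noncomputable def fm (m : ℤ) : M rA m →ₗ[ℤ] M rB m :=
  Matrix.mulVecLin (Matrix.of fun _ _ => if m = 1 then (2:ℤ) else if m = 0 then 1 else 0)

/-- g : B → C with sole nonzero component g₁ = 2 : B₁ → C₁ -/
noncomputable def gm (m : ℤ) : M rB m →ₗ[ℤ] M rC m :=
  Matrix.mulVecLin (Matrix.of fun _ _ => if m = 1 then (2:ℤ) else 0)

/-- h : C → D with sole nonzero component h₂ = 1 : C₂ → D₂ -/
noncomputable def hm (m : ℤ) : M rC m →ₗ[ℤ] M rD m :=
  Matrix.mulVecLin (Matrix.of fun _ _ => if m = 2 then (1:ℤ) else 0)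


lemma mv_apply {p q : ℕ} (a : ℤ) (v : Fin q → ℤ) (i : Fin p) :
    ((Matrix.of fun _ _ => a : Matrix (Fin p) (Fin q) ℤ)).mulVec v i = a * ∑ j, v j := by
  simp [Matrix.mulVec, dotProduct, Finset.mul_sum]

lemma mvmul_apply {p q r : ℕ} (a b : ℤ) (v : Fin r → ℤ) (i : Fin p) :
    (((Matrix.of fun _ _ => a) : Matrix (Fin p) (Fin q) ℤ) * ((Matrix.of fun _ _ => b) : Matrix (Fin q) (Fin r) ℤ)).mulVec v i
      = (q : ℤ) * (a * (b * ∑ j, v j)) := by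
  simp [Matrix.mul_apply, Matrix.mulVec, dotProduct, Finset.mul_sum, Finset.sum_const]
  exact Finset.sum_congr rfl fun x _ => by ring

lemma mvl_apply {p q : ℕ} (a : ℤ) (v : Fin q → ℤ) (i : Fin p) :
    (Matrix.mulVecLin (Matrix.of fun _ _ => a : Matrix (Fin p) (Fin q) ℤ) v) i = a * ∑ j, v j := by
  simp [Matrix.mulVecLin, Matrix.mulVec, dotProduct, Finset.mul_sum]

lemma sum_fin_one {n : ℕ} (f : Fin n → ℤ) (i : Fin n) (h : n = 1) : ∑ j, f j = f i := by
  subst h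
  rw [Fin.sum_univ_one]
  congr
  exact Subsingleton.elim _ _

/-- explicit nullhomotopy of g∘f -/
noncomputable def Sh (t : ℤ) : M rA t →ₗ[ℤ] M rC (t+1) :=
  Matrix.mulVecLin (Matrix.of fun _ _ => if t = 1 then (1:ℤ) else 0)

theorem statement18 :
    -- the four graded objects are chain complexes:
    (∀ m : ℤ, (dA m).comp (dA (m+1)) = 0) ∧ (∀ m : ℤ, (dB m).comp (dB (m+1)) = 0) ∧
    (∀ m : ℤ, (dC m).comp (dC (m+1)) = 0) ∧ (∀ m : ℤ, (dD m).comp (dD (m+1)) = 0) ∧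
    -- f, g, h are chain maps:
    (∀ m : ℤ, (dB m).comp (fm (m+1)) = (fm m).comp (dA m)) ∧
    (∀ m : ℤ, (dC m).comp (gm (m+1)) = (gm m).comp (dB m)) ∧
    (∀ m : ℤ, (dD m).comp (hm (m+1)) = (hm m).comp (dC m)) ∧
    -- g∘f is nullhomotopic:
    (∃ S : ∀ t : ℤ, M rA t →ₗ[ℤ] M rC (t+1),
      ∀ t : ℤ, (gm (t+1)).comp (fm (t+1)) = (dC (t+1)).comp (S (t+1)) + (S t).comp (dA t)) ∧
    -- h∘g is nullhomotopic:
    (∃ T : ∀ t : ℤ, M rB t →ₗ[ℤ] M rD (t+1),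
      ∀ t : ℤ, (hm (t+1)).comp (gm (t+1)) = (dD (t+1)).comp (T (t+1)) + (T t).comp (dB t)) ∧
    -- for EVERY such S and T, the Toda map φ(S,T) : ΣA → D, with components
    -- φ out of (ΣA)_{t+1} = A_t given by h∘S − T∘f, is not chain homotopic to zero
    -- (the suspension differential being −∂_A):
    (∀ (S : ∀ t : ℤ, M rA t →ₗ[ℤ] M rC (t+1)) (T : ∀ t : ℤ, M rB t →ₗ[ℤ] M rD (t+1)),
      (∀ t : ℤ, (gm (t+1)).comp (fm (t+1)) = (dC (t+1)).comp (S (t+1)) + (S t).comp (dA t)) →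
      (∀ t : ℤ, (hm (t+1)).comp (gm (t+1)) = (dD (t+1)).comp (T (t+1)) + (T t).comp (dB t)) →
      ¬ ∃ U : ∀ t : ℤ, M rA t →ₗ[ℤ] M rD (t+1+1),
          ∀ t : ℤ, (hm (t+1+1)).comp (S (t+1)) - (T (t+1)).comp (fm (t+1))
            = (dD (t+1+1)).comp (U (t+1)) - (U t).comp (dA t)) := by
  refine ⟨?_, ?_, ?_, ?_, ?_, ?_, ?_, ?_, ?_, ?_⟩
  · intro m
    refine LinearMap.ext fun v => funext fun i => ?_
    rcases eq_or_ne m 0 with rfl | h0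
    · norm_num [LinearMap.comp_apply, dA, mvl_apply, mv_apply, mvmul_apply]
    · simp [LinearMap.comp_apply, dA, mvl_apply, mv_apply, mvmul_apply, h0]
  · intro m
    refine LinearMap.ext fun v => funext fun i => ?_
    rcases eq_or_ne m 0 with rfl | h0
    · norm_num [LinearMap.comp_apply, dB, mvl_apply, mv_apply, mvmul_apply]
    · simp [LinearMap.comp_apply, dB, mvl_apply, mv_apply, mvmul_apply, h0]
  · intro m
    refine LinearMap.ext fun v => funext fun i => ?_
    rcases eq_or_ne m 1 with rfl | h1
    · norm_num [LinearMap.comp_apply, dC, mvl_apply, mv_apply, mvmul_apply]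
    · simp [LinearMap.comp_apply, dC, mvl_apply, mv_apply, mvmul_apply, h1]
  · intro m
    refine LinearMap.ext fun v => funext fun i => ?_
    simp [LinearMap.comp_apply, dD, mvl_apply, mv_apply, mvmul_apply]
  · intro m
    refine LinearMap.ext fun v => funext fun i => ?_
    rcases eq_or_ne m 0 with rfl | h0
    · norm_num [LinearMap.comp_apply, dB, fm, dA, mvl_apply, mv_apply, mvmul_apply, Finset.mul_sum,
        Finset.sum_const, Finset.card_univ, Fintype.card_fin, rA, rB]
      try exact Finset.sum_congr rfl fun x _ => by ring
    rcases eq_or_ne m 1 with rfl | h1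
    · norm_num [LinearMap.comp_apply, dB, fm, dA, mvl_apply, mv_apply, mvmul_apply,
        Finset.sum_const, Finset.card_univ, Fintype.card_fin, rA, rB]
    have hx : m + 1 ≠ 1 := by omega
    simp [LinearMap.comp_apply, dB, fm, dA, mvl_apply, mv_apply, mvmul_apply, h0, h1, hx]
  · intro m
    refine LinearMap.ext fun v => funext fun i => ?_
    rcases eq_or_ne m 0 with rfl | h0
    · norm_num [LinearMap.comp_apply, dC, gm, dB, mvl_apply, mv_apply, mvmul_apply, Finset.mul_sum]
      try exact Finset.sum_congr rfl fun x _ => by ring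
    rcases eq_or_ne m 1 with rfl | h1
    · norm_num [LinearMap.comp_apply, dC, gm, dB, mvl_apply, mv_apply, mvmul_apply]
    have hx : m + 1 ≠ 1 := by omega
    simp [LinearMap.comp_apply, dC, gm, dB, mvl_apply, mv_apply, mvmul_apply, h0, h1, hx]
  · intro m
    refine LinearMap.ext fun v => funext fun i => ?_
    rcases eq_or_ne m 2 with rfl | h2
    · norm_num [LinearMap.comp_apply, dD, hm, dC, mvl_apply, mv_apply, mvmul_apply]
    · simp [LinearMap.comp_apply, dD, hm, dC, mvl_apply, mv_apply, mvmul_apply, h2]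
  · refine ⟨Sh, fun t => ?_⟩
    refine LinearMap.ext fun v => funext fun i => ?_
    rcases eq_or_ne t 0 with rfl | h0
    · norm_num [LinearMap.comp_apply, LinearMap.add_apply, Pi.add_apply, gm, fm, dC, dA, Sh,
        mvl_apply, mv_apply, mvmul_apply, Finset.mul_sum, rA, rB, rC]
      try exact Finset.sum_congr rfl fun x _ => by ring
    have hx : t + 1 ≠ 1 := by omega
    simp [LinearMap.comp_apply, LinearMap.add_apply, Pi.add_apply, gm, fm, dC, dA, Sh,
      mvl_apply, mv_apply, mvmul_apply, h0, hx]
  · refine ⟨fun _ => 0, fun t => ?_⟩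
    refine LinearMap.ext fun v => funext fun i => ?_
    rcases eq_or_ne t 1 with rfl | h1
    · norm_num [LinearMap.comp_apply, LinearMap.add_apply, Pi.add_apply, hm, gm, mvl_apply,
        mv_apply, mvmul_apply]
    have hx : t + 1 ≠ 2 := by omega
    simp [LinearMap.comp_apply, LinearMap.add_apply, Pi.add_apply, hm, gm, mvl_apply,
      mv_apply, mvmul_apply, hx]
  · rintro S T hS hT ⟨U, hU⟩
    set e1 : M rA (0+1) := fun _ => 1 with he1
    set eA0 : M rA 0 := fun _ => 1 with heA0
    set eB1 : M rB (0+1) := fun _ => 1 with heB1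
    let iC1 : Fin (rC (0+1)) := ⟨0, Nat.one_pos⟩
    let iC2 : Fin (rC (0+1+1)) := ⟨0, Nat.one_pos⟩
    let iD2 : Fin (rD (0+1+1)) := ⟨0, Nat.one_pos⟩
    let iA1 : Fin (rA (0+1)) := ⟨0, Nat.one_pos⟩
    have sA : (∑ k : Fin (rA (0+1)), e1 k) = 1 := by
      rw [sum_fin_one (n := rA (0+1)) e1 iA1 rfl]
    have hdA : dA 0 e1 = (8:ℤ) • eA0 := by
      funext i
      norm_num [dA, mvl_apply, sA, heA0, rA]
    have hfm : fm (0+1) e1 = (2:ℤ) • eB1 := by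
      funext i
      norm_num [fm, mvl_apply, sA, heB1, rA]
    set s : ℤ := S (0+1) e1 iC2 with hs
    set c : ℤ := S 0 eA0 iC1 with hc
    set t : ℤ := T (0+1) eB1 iD2 with ht
    set u : ℤ := U 0 eA0 iD2 with hu
    have sS : (∑ j : Fin (rC (0+1+1)), S (0+1) e1 j) = s := by
      rw [sum_fin_one (n := rC (0+1+1)) _ iC2 rfl]
    have E1 : (4:ℤ) = 4 * s + 8 * c := by
      have h := congrFun (DFunLike.congr_fun (hS 0) e1) iC1
      simp only [LinearMap.comp_apply, LinearMap.add_apply, Pi.add_apply] at h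
      rw [hdA, map_smul] at h
      simp only [gm, fm, dC, mvl_apply, Pi.smul_apply, smul_eq_mul] at h
      norm_num [sA, sS, Finset.sum_const, Finset.card_univ, Fintype.card_fin, rA, rB, rC] at h
      rw [hc]
      exact h
    have E2 : s - 2 * t = -(8 * u) := by
      have h := congrFun (DFunLike.congr_fun (hU 0) e1) iD2
      simp only [LinearMap.comp_apply, LinearMap.sub_apply, Pi.sub_apply] at h
      rw [hdA, hfm, map_smul, map_smul] at h
      simp only [hm, dD, mvl_apply, Pi.smul_apply, smul_eq_mul] at h
      norm_num [sS, Finset.sum_const, Finset.card_univ, Fintype.card_fin, rC, rD] at h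
      rw [ht, hu]
      exact h
    omega
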